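/- The Puiseux monoid H = ⟨1/p : p prime⟩ satisfies the ACCP but is not a BF-monoid; in particular, its set of atoms is {1/p : p prime}, and p ∈ L(1) for every prime p, so L(1) is infinite. -/

import Mathlib

namespace PuiseuxAux

abbrev PP : Set ℚ := {q : ℚ | ∃ p : ℕ, p.Prime ∧ q = 1 / p}
abbrev Hcl : AddSubmonoid ℚ := AddSubmonoid.closure PP

def Rep (x : ℚ) (n : ℕ) (S : Finset ℕ) (a : ℕ → ℕ) : Prop :=
  (∀ p ∈ S, Nat.Prime p) ∧ (∀ p ∈ S, 0 < a p ∧ a p < p) ∧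
    x = (n : ℚ) + ∑ p ∈ S, (a p : ℚ) / p

def HasRep (x : ℚ) : Prop := ∃ n S a, Rep x n S a

theorem rep_nonneg {x n S a} (h : Rep x n S a) : (n : ℚ) ≤ x := by
  obtain ⟨hp, ha, hx⟩ := h
  have : 0 ≤ ∑ p ∈ S, (a p : ℚ) / p :=
    Finset.sum_nonneg fun p hp => by positivity
  linarith [hx]


theorem rep_zero_iff {x n S a} (h : Rep x n S a) :
    x = 0 ↔ (n = 0 ∧ ∑ p ∈ S, a p = 0) := by
  obtain ⟨hp, ha, hx⟩ := h
  constructor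
  · intro h0
    have hn : (n : ℚ) ≤ 0 := h0 ▸ rep_nonneg ⟨hp, ha, hx⟩
    have hn0 : n = 0 := by exact_mod_cast le_antisymm hn (by positivity)
    refine ⟨hn0, ?_⟩
    subst hn0
    have hsum : ∑ p ∈ S, (a p : ℚ) / p = 0 := by
      rw [h0] at hx; simpa using hx.symm
    have : ∀ p ∈ S, (a p : ℚ) / p = 0 := by
      intro p hpS
      have := (Finset.sum_eq_zero_iff_of_nonneg
        (fun p hp => by positivity)).mp hsum p hpS
      exact this
    refine Finset.sum_eq_zero fun p hpS => ?_
    have hppos : (0:ℚ) < p := by exact_mod_cast (hp p hpS).pos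
    have := this p hpS
    have : (a p : ℚ) = 0 := by
      field_simp at this; exact_mod_cast this
    exact_mod_cast this
  · rintro ⟨hn0, hsum⟩
    subst hn0
    rw [hx]
    have : ∀ p ∈ S, a p = 0 := fun p hp => (Finset.sum_eq_zero_iff.mp hsum) p hp
    simp only [Nat.cast_zero]
    rw [Finset.sum_eq_zero fun p hpS => by rw [this p hpS]; simp]
    simp


theorem rep_add {x y : ℚ} {n m : ℕ} {S T : Finset ℕ} {a b : ℕ → ℕ}
    (hx : Rep x n S a) (hy : Rep y m T b) :
    ∃ C U d, Rep (x + y) (n + m + C) U d ∧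
      (C = 0 → ∑ p ∈ U, d p = ∑ p ∈ S, a p + ∑ p ∈ T, b p) := by
  obtain ⟨hpS, haS, hxe⟩ := hx
  obtain ⟨hpT, hbT, hye⟩ := hy
  set e : ℕ → ℕ := fun p => (if p ∈ S then a p else 0) + (if p ∈ T then b p else 0) with he
  set U0 : Finset ℕ := S ∪ T with hU0
  have hprime : ∀ p ∈ U0, Nat.Prime p := by
    intro p hp
    rcases Finset.mem_union.mp hp with h | h
    exacts [hpS p h, hpT p h]
  refine ⟨∑ p ∈ U0, e p / p, U0.filter (fun p => e p % p ≠ 0), fun p => e p % p, ?_, ?_⟩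
  · refine ⟨?_, ?_, ?_⟩
    · intro p hp; exact hprime p (Finset.mem_filter.mp hp).1
    · intro p hp
      obtain ⟨hp0, hne⟩ := Finset.mem_filter.mp hp
      exact ⟨Nat.pos_of_ne_zero hne, Nat.mod_lt _ (hprime p hp0).pos⟩
    · -- x + y = (n+m+C) + ∑ filter (e%p)/p
      have split : ∀ (W : Finset ℕ) (c : ℕ → ℕ), W ⊆ U0 →
          ∑ p ∈ W, (c p : ℚ) / p = ∑ p ∈ U0, ((if p ∈ W then c p else 0 : ℕ) : ℚ) / p := by
        intro W c hW
        rw [← Finset.sum_subset hW (fun p _ hn => by simp [hn])]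
        exact Finset.sum_congr rfl fun p hp => by simp [hp]
      have hsum : ∑ p ∈ S, (a p : ℚ) / p + ∑ p ∈ T, (b p : ℚ) / p
          = ∑ p ∈ U0, (e p : ℚ) / p := by
        rw [split S a Finset.subset_union_left, split T b Finset.subset_union_right,
          ← Finset.sum_add_distrib]
        refine Finset.sum_congr rfl fun p hp => ?_
        simp only [he]
        push_cast
        ring
      have hdm : ∀ p ∈ U0, (e p : ℚ) / p = (e p / p : ℕ) + ((e p % p : ℕ) : ℚ) / p := by
        intro p hp
        have hp0 : (p : ℚ) ≠ 0 := by exact_mod_cast (hprime p hp).pos.ne'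
        field_simp
        rw [mul_comm]
        exact_mod_cast (Nat.div_add_mod' (e p) p).symm
      have hsum2 : ∑ p ∈ U0, (e p : ℚ) / p
          = (∑ p ∈ U0, e p / p : ℕ) + ∑ p ∈ U0, ((e p % p : ℕ) : ℚ) / p := by
        rw [Finset.sum_congr rfl hdm, Finset.sum_add_distrib]
        push_cast
        ring
      have hfil : ∑ p ∈ U0.filter (fun p => e p % p ≠ 0), ((e p % p : ℕ) : ℚ) / p
          = ∑ p ∈ U0, ((e p % p : ℕ) : ℚ) / p := by
        refine Finset.sum_filter_of_ne fun p hp hne => ?_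
        intro h0
        rw [h0] at hne
        simp at hne
      rw [hxe, hye]
      push_cast
      rw [hfil]
      have := hsum2
      push_cast at hsum this ⊢
      linarith [hsum, this]
  · intro hC
    have hlt : ∀ p ∈ U0, e p % p = e p := by
      intro p hp
      have h0 : e p / p = 0 := Finset.sum_eq_zero_iff.mp hC p hp
      exact Nat.mod_eq_of_lt ((Nat.div_eq_zero_iff.mp h0).resolve_left (hprime p hp).pos.ne')
    have h1 : ∑ p ∈ U0.filter (fun p => e p % p ≠ 0), e p % p = ∑ p ∈ U0, e p % p :=
      Finset.sum_filter_of_ne fun p hp hne h0 => by rw [h0] at hne; simp at hne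
    rw [h1, Finset.sum_congr rfl hlt]
    have split : ∀ (W : Finset ℕ) (c : ℕ → ℕ), W ⊆ U0 →
        ∑ p ∈ W, c p = ∑ p ∈ U0, (if p ∈ W then c p else 0) := by
      intro W c hW
      rw [← Finset.sum_subset hW (fun p _ hn => by simp [hn])]
      exact Finset.sum_congr rfl fun p hp => by simp [hp]
    rw [split S a Finset.subset_union_left, split T b Finset.subset_union_right,
      ← Finset.sum_add_distrib]


theorem rep_unique {x : ℚ} {n m : ℕ} {S T : Finset ℕ} {a b : ℕ → ℕ}
    (hx : Rep x n S a) (hy : Rep x m T b) :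
    n = m ∧ ∑ p ∈ S, a p = ∑ p ∈ T, b p := by
  obtain ⟨hpS, haS, hxe⟩ := hx
  obtain ⟨hpT, hbT, hye⟩ := hy
  set a' : ℕ → ℕ := fun p => if p ∈ S then a p else 0 with ha'
  set b' : ℕ → ℕ := fun p => if p ∈ T then b p else 0 with hb'
  set U : Finset ℕ := S ∪ T with hU
  have hprime : ∀ p ∈ U, Nat.Prime p := by
    intro p hp
    rcases Finset.mem_union.mp hp with h | h
    exacts [hpS p h, hpT p h]
  have split : ∀ (W : Finset ℕ) (c : ℕ → ℕ), W ⊆ U →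
      ∑ p ∈ W, (c p : ℚ) / p = ∑ p ∈ U, ((if p ∈ W then c p else 0 : ℕ) : ℚ) / p := by
    intro W c hW
    rw [← Finset.sum_subset hW (fun p _ hn => by simp [hn])]
    exact Finset.sum_congr rfl fun p hp => by simp [hp]
  have hxa : x = (n : ℚ) + ∑ p ∈ U, (a' p : ℚ) / p := by
    rw [hxe, split S a Finset.subset_union_left]
  have hxb : x = (m : ℚ) + ∑ p ∈ U, (b' p : ℚ) / p := by
    rw [hye, split T b Finset.subset_union_right]
  set P : ℕ := ∏ p ∈ U, p with hP
  -- integer-level identity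
  have key : ∀ (k : ℕ) (c : ℕ → ℕ), x = (k : ℚ) + ∑ p ∈ U, (c p : ℚ) / p →
      ((k * P + ∑ p ∈ U, c p * ∏ r ∈ U.erase p, r : ℕ) : ℚ) = x * P := by
    intro k c hc
    push_cast
    rw [hc, add_mul, Finset.sum_mul]
    congr 1
    refine Finset.sum_congr rfl fun p hp => ?_
    have hp0 : (p : ℚ) ≠ 0 := by exact_mod_cast (hprime p hp).pos.ne'
    have : (P : ℚ) = (p : ℚ) * ∏ r ∈ U.erase p, (r : ℚ) := by
      rw [hP]; push_cast
      exact (Finset.mul_prod_erase U _ hp).symm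
    push_cast [this]
    field_simp
  have heqQ : ((n * P + ∑ p ∈ U, a' p * ∏ r ∈ U.erase p, r : ℕ) : ℚ)
      = ((m * P + ∑ p ∈ U, b' p * ∏ r ∈ U.erase p, r : ℕ) : ℚ) := by
    rw [key n a' hxa, key m b' hxb]
  have heqN : (n * P + ∑ p ∈ U, a' p * ∏ r ∈ U.erase p, r : ℕ)
      = (m * P + ∑ p ∈ U, b' p * ∏ r ∈ U.erase p, r : ℕ) := by
    exact_mod_cast heqQ
  -- pointwise equality of a' and b' on U
  have hpt : ∀ q ∈ U, a' q = b' q := by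
    intro q hq
    have hqp : Nat.Prime q := hprime q hq
    haveI : Fact q.Prime := ⟨hqp⟩
    have hred : ∀ c : ℕ → ℕ, ((∑ p ∈ U, c p * ∏ r ∈ U.erase p, r : ℕ) : ZMod q)
        = (c q : ZMod q) * ((∏ r ∈ U.erase q, r : ℕ) : ZMod q) := by
      intro c
      push_cast
      rw [Finset.sum_eq_single q]
      · intro p hp hne
        have hqZ : ((q : ℕ) : ZMod q) = 0 := by
          exact_mod_cast (ZMod.natCast_eq_zero_iff q q).mpr dvd_rfl
        have : ((∏ r ∈ U.erase p, (r : ZMod q)) : ZMod q) = 0 := by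
          apply Finset.prod_eq_zero (Finset.mem_erase.mpr ⟨Ne.symm hne, hq⟩)
          exact hqZ
        rw [this, mul_zero]
      · intro h; exact absurd hq h
    have hPZ : ((P : ℕ) : ZMod q) = 0 := by
      rw [ZMod.natCast_eq_zero_iff]
      exact Finset.dvd_prod_of_mem _ hq
    have hmain : (a' q : ZMod q) * ((∏ r ∈ U.erase q, r : ℕ) : ZMod q)
        = (b' q : ZMod q) * ((∏ r ∈ U.erase q, r : ℕ) : ZMod q) := by
      have t1 : ((n * P + ∑ p ∈ U, a' p * ∏ r ∈ U.erase p, r : ℕ) : ZMod q)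
          = ((m * P + ∑ p ∈ U, b' p * ∏ r ∈ U.erase p, r : ℕ) : ZMod q) := by
        rw [heqN]
      rw [Nat.cast_add, Nat.cast_add, Nat.cast_mul, Nat.cast_mul, hred a', hred b',
        hPZ, mul_zero, zero_add] at t1
      simpa using t1
    have hunit : ((∏ r ∈ U.erase q, r : ℕ) : ZMod q) ≠ 0 := by
      rw [Ne, ZMod.natCast_eq_zero_iff]
      intro hdvd
      obtain ⟨r, hr, hqr⟩ := hqp.prime.exists_mem_finset_dvd hdvd
      have hrU : r ∈ U := (Finset.mem_erase.mp hr).2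
      have : q = r := ((Nat.prime_dvd_prime_iff_eq hqp (hprime r hrU)).mp hqr)
      exact (Finset.mem_erase.mp hr).1 this.symm
    have : (a' q : ZMod q) = (b' q : ZMod q) := mul_right_cancel₀ hunit hmain
    have hlt : ∀ c : ℕ → ℕ, (∀ p ∈ U, p ∈ S → c p < p) → True := fun _ _ => trivial
    have haq : a' q < q := by
      by_cases h : q ∈ S
      · simpa [ha', h] using (haS q h).2
      · simp [ha', h, hqp.pos]
    have hbq : b' q < q := by
      by_cases h : q ∈ T
      · simpa [hb', h] using (hbT q h).2
      · simp [hb', h, hqp.pos]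
    calc a' q = (a' q : ZMod q).val := (ZMod.val_cast_of_lt haq).symm
      _ = (b' q : ZMod q).val := by rw [this]
      _ = b' q := ZMod.val_cast_of_lt hbq
  -- conclude
  have hsum' : ∑ p ∈ U, (a' p : ℚ) / p = ∑ p ∈ U, (b' p : ℚ) / p :=
    Finset.sum_congr rfl fun p hp => by rw [hpt p hp]
  have hnm : (n : ℚ) = m := by rw [hxa, hsum'] at hxb; linarith
  refine ⟨by exact_mod_cast hnm, ?_⟩
  have h1 : ∑ p ∈ S, a p = ∑ p ∈ U, a' p := by
    rw [← Finset.sum_subset (Finset.subset_union_left : S ⊆ U) (fun p _ hn => by simp [ha', hn])]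
    exact Finset.sum_congr rfl fun p hp => by simp [ha', hp]
  have h2 : ∑ p ∈ T, b p = ∑ p ∈ U, b' p := by
    rw [← Finset.sum_subset (Finset.subset_union_right : T ⊆ U) (fun p _ hn => by simp [hb', hn])]
    exact Finset.sum_congr rfl fun p hp => by simp [hb', hp]
  rw [h1, h2]
  exact Finset.sum_congr rfl fun p hp => by rw [hpt p hp]


theorem one_div_mem {p : ℕ} (hp : p.Prime) : (1 : ℚ) / p ∈ Hcl :=
  AddSubmonoid.subset_closure ⟨p, hp, rfl⟩

theorem cast_div_mem {p c : ℕ} (hp : p.Prime) : ((c : ℚ)) / p ∈ Hcl := by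
  have : ((c : ℚ)) / p = c • ((1 : ℚ) / p) := by
    rw [nsmul_eq_mul]; ring
  rw [this]
  exact AddSubmonoid.nsmul_mem Hcl (one_div_mem hp) c

theorem natCast_mem (k : ℕ) : ((k : ℚ)) ∈ Hcl := by
  have h1 : (1 : ℚ) ∈ Hcl := by
    have : (1 : ℚ) = 1 / 2 + 1 / 2 := by norm_num
    rw [this]
    exact AddSubmonoid.add_mem _ (one_div_mem Nat.prime_two) (one_div_mem Nat.prime_two)
  have : ((k : ℚ)) = k • (1 : ℚ) := by simp
  rw [this]
  exact AddSubmonoid.nsmul_mem Hcl h1 k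

theorem rep_mem {x n S a} (h : Rep x n S a) : x ∈ Hcl := by
  obtain ⟨hp, ha, hx⟩ := h
  rw [hx]
  exact AddSubmonoid.add_mem _ (natCast_mem n)
    (AddSubmonoid.sum_mem _ fun p hpS => cast_div_mem (hp p hpS))

theorem mem_hasRep {x : ℚ} (hx : x ∈ Hcl) : HasRep x := by
  induction hx using AddSubmonoid.closure_induction with
  | mem q hq =>
    obtain ⟨p, hp, rfl⟩ := hq
    refine ⟨0, {p}, fun _ => 1, fun r hr => ?_, fun r hr => ?_, by simp⟩
    · simp only [Finset.mem_singleton] at hr; exact hr ▸ hp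
    · simp only [Finset.mem_singleton] at hr; subst hr; exact ⟨one_pos, hp.one_lt⟩
  | zero => exact ⟨0, ∅, fun _ => 0, by simp, by simp, by simp⟩
  | add x y _ _ ihx ihy =>
    obtain ⟨n, S, a, hra⟩ := ihx
    obtain ⟨m, T, b, hrb⟩ := ihy
    obtain ⟨C, U, d, hr, -⟩ := rep_add hra hrb
    exact ⟨n + m + C, U, d, hr⟩

open Classical in
noncomputable def nu (x : ℚ) : ℕ := if h : HasRep x then h.choose else 0

open Classical in
noncomputable def bb (x : ℚ) : ℕ :=
  if h : HasRep x then
    ∑ p ∈ h.choose_spec.choose, h.choose_spec.choose_spec.choose p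
  else 0

theorem canon_spec {x : ℚ} (h : HasRep x) :
    ∃ S a, Rep x (nu x) S a ∧ bb x = ∑ p ∈ S, a p := by
  refine ⟨h.choose_spec.choose, h.choose_spec.choose_spec.choose, ?_, ?_⟩
  · have := h.choose_spec.choose_spec.choose_spec
    simpa [nu, dif_pos h] using this
  · simp [bb, dif_pos h]

theorem nu_bb_eq {x : ℚ} {n S a} (h : Rep x n S a) : nu x = n ∧ bb x = ∑ p ∈ S, a p := by
  have hh : HasRep x := ⟨n, S, a, h⟩
  obtain ⟨T, b, hr, hbb⟩ := canon_spec hh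
  obtain ⟨h1, h2⟩ := rep_unique hr h
  exact ⟨h1, by rw [hbb, h2]⟩

theorem eq_zero_of_nu_bb {x : ℚ} (h : HasRep x) (h1 : nu x = 0) (h2 : bb x = 0) :
    x = 0 := by
  obtain ⟨S, a, hr, hbb⟩ := canon_spec h
  exact (rep_zero_iff hr).mpr ⟨h1, by rw [← hbb]; exact h2⟩

theorem step_lemma {y h : ℚ} (hy : HasRep y) (hh : HasRep h) :
    nu y ≤ nu (y + h) ∧
      (nu (y + h) = nu y → bb (y + h) = bb y + bb h ∧ nu h = 0) := by
  obtain ⟨S, a, ry, hby⟩ := canon_spec hy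
  obtain ⟨T, b, rh, hbh⟩ := canon_spec hh
  obtain ⟨C, U, d, rsum, hC⟩ := rep_add ry rh
  obtain ⟨h1, h2⟩ := nu_bb_eq rsum
  constructor
  · rw [h1]; omega
  · intro heq
    rw [h1] at heq
    have hnuh : nu h = 0 := by omega
    have hC0 : C = 0 := by omega
    refine ⟨?_, hnuh⟩
    rw [h2, hC hC0, ← hby, ← hbh]

theorem stab (f : ℕ → ℕ) (hf : ∀ k, f (k + 1) ≤ f k) :
    ∃ N, ∀ k, N ≤ k → f k = f N := by
  have anti : ∀ j k, j ≤ k → f k ≤ f j := by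
    intro j k h
    induction h with
    | refl => exact le_rfl
    | step _ ih => exact le_trans (hf _) ih
  have hne : (Set.range f).Nonempty := ⟨f 0, 0, rfl⟩
  obtain ⟨N, hN⟩ := Nat.sInf_mem hne
  refine ⟨N, fun k hk => le_antisymm (hN ▸ anti N k hk) ?_⟩
  rw [hN]
  exact Nat.sInf_le ⟨k, rfl⟩

end PuiseuxAux

open PuiseuxAux

/-- The Puiseux monoid H = ⟨1/p : p prime⟩ satisfies the ACCP, its atoms are
exactly the 1/p, every prime p lies in L(1), and L(1) is infinite (so H is not
a BF-monoid). -/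
theorem primeReciprocals_accp_not_BF :
    ∀ H : AddSubmonoid ℚ,
      H = AddSubmonoid.closure {q : ℚ | ∃ p : ℕ, p.Prime ∧ q = 1 / p} →
    ∀ A : Set ℚ, A = {u : ℚ | u ∈ H ∧ u ≠ 0 ∧
        ¬∃ x ∈ H, ∃ y ∈ H, x ≠ 0 ∧ y ≠ 0 ∧ u = x + y} →
    ∀ L : ℚ → Set ℕ, (∀ a : ℚ, L a = {k : ℕ | ∃ f : Fin k → ℚ,
        (∀ i, f i ∈ A) ∧ a = ∑ i, f i}) →
    (∀ s : ℕ → ℚ, (∀ k, s k ∈ H) →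
        (∀ k, ∃ h ∈ H, s k = s (k + 1) + h) → ∃ N, ∀ k, N ≤ k → s k = s N) ∧
    (A = {q : ℚ | ∃ p : ℕ, p.Prime ∧ q = 1 / p}) ∧
    (∀ p : ℕ, p.Prime → p ∈ L 1) ∧ (L 1).Infinite := by
  intro H hH A hA L hL
  subst hH
  -- the set of atoms is PP
  have hA' : A = PP := by
    rw [hA]
    ext u
    simp only [Set.mem_setOf_eq]
    constructor
    · rintro ⟨huH, hu0, hno⟩
      obtain ⟨n, S, a, hr⟩ := mem_hasRep huH
      obtain ⟨hpS, haS, hue⟩ := hr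
      by_cases hn : n = 0
      · subst hn
        have hSne : S.Nonempty := by
          by_contra hS
          rw [Finset.not_nonempty_iff_eq_empty] at hS
          apply hu0
          rw [hue, hS]; simp
        obtain ⟨q, hqS⟩ := hSne
        have hq := hpS q hqS
        have hq0 : (0:ℚ) < 1 / q := by
          have : (0:ℚ) < q := by exact_mod_cast hq.pos
          positivity
        set w : ℚ := ((a q - 1 : ℕ) : ℚ) / q + ∑ p ∈ S.erase q, (a p : ℚ) / p with hw
        have hwH : w ∈ AddSubmonoid.closure PP :=
          AddSubmonoid.add_mem _ (cast_div_mem hq)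
            (AddSubmonoid.sum_mem _ fun p hp =>
              cast_div_mem (hpS p (Finset.mem_of_mem_erase hp)))
        have hsplit : u = 1 / q + w := by
          rw [hue, hw, ← Finset.add_sum_erase S _ hqS]
          have h1 : 1 ≤ a q := (haS q hqS).1
          have : ((a q : ℚ)) = 1 + ((a q - 1 : ℕ) : ℚ) := by
            push_cast [Nat.cast_sub h1]
            ring
          rw [this]
          push_cast
          ring
        by_cases hw0 : w = 0
        · exact ⟨q, hq, by rw [hsplit, hw0, add_zero]⟩
        · exact absurd ⟨1 / q, one_div_mem hq, w, hwH, hq0.ne', hw0, hsplit⟩ hno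
      · exfalso
        apply hno
        have hs0 : (0:ℚ) ≤ ∑ p ∈ S, (a p : ℚ) / p :=
          Finset.sum_nonneg fun p hp => by positivity
        refine ⟨1 / 2, one_div_mem Nat.prime_two,
          1 / 2 + ((n - 1 : ℕ) : ℚ) + ∑ p ∈ S, (a p : ℚ) / p, ?_, by norm_num, ?_, ?_⟩
        · exact AddSubmonoid.add_mem _
            (AddSubmonoid.add_mem _ (one_div_mem Nat.prime_two) (natCast_mem _))
            (AddSubmonoid.sum_mem _ fun p hp => cast_div_mem (hpS p hp))
        · have h2 : (0:ℚ) ≤ ((n - 1 : ℕ) : ℚ) := Nat.cast_nonneg _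
          have hpos : (0:ℚ) < 1 / 2 + ((n - 1 : ℕ) : ℚ) + ∑ p ∈ S, (a p : ℚ) / p := by
            linarith
          exact hpos.ne'
        · rw [hue]
          have h1 : 1 ≤ n := Nat.one_le_iff_ne_zero.mpr hn
          have : ((n : ℚ)) = ((n - 1 : ℕ) : ℚ) + 1 := by
            push_cast [Nat.cast_sub h1]; ring
          rw [this]; ring
    · rintro ⟨p, hp, rfl⟩
      have hp0 : (0:ℚ) < 1 / p := by
        have : (0:ℚ) < p := by exact_mod_cast hp.pos
        positivity
      refine ⟨one_div_mem hp, hp0.ne', ?_⟩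
      rintro ⟨x, hx, y, hy, hx0, hy0, hxy⟩
      obtain ⟨n, S, a, rx⟩ := mem_hasRep hx
      obtain ⟨m, T, b, ry⟩ := mem_hasRep hy
      obtain ⟨C, U, d, rs, hC⟩ := rep_add rx ry
      rw [← hxy] at rs
      have r1 : Rep (1 / p) 0 {p} (fun _ => 1) := by
        refine ⟨fun r hr => ?_, fun r hr => ?_, by simp⟩
        · simp only [Finset.mem_singleton] at hr; exact hr ▸ hp
        · simp only [Finset.mem_singleton] at hr; subst hr; exact ⟨one_pos, hp.one_lt⟩
      obtain ⟨h1, h2⟩ := rep_unique rs r1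
      have hn : n = 0 := by omega
      have hm : m = 0 := by omega
      have hC0 : C = 0 := by omega
      have hxa : 1 ≤ ∑ r ∈ S, a r := by
        rcases Nat.eq_zero_or_pos (∑ r ∈ S, a r) with h | h
        · exact absurd ((rep_zero_iff rx).mpr ⟨hn, h⟩) hx0
        · omega
      have hyb : 1 ≤ ∑ r ∈ T, b r := by
        rcases Nat.eq_zero_or_pos (∑ r ∈ T, b r) with h | h
        · exact absurd ((rep_zero_iff ry).mpr ⟨hm, h⟩) hy0
        · omega
      have := hC hC0
      simp only [Finset.sum_singleton] at h2
      omega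
  -- every prime is a length of 1
  have hmemL : ∀ p : ℕ, p.Prime → p ∈ L 1 := by
    intro p hp
    rw [hL]
    refine ⟨fun _ => 1 / p, fun i => by rw [hA']; exact ⟨p, hp, rfl⟩, ?_⟩
    have hp0 : ((p : ℚ)) ≠ 0 := by exact_mod_cast hp.pos.ne'
    rw [Finset.sum_const, Finset.card_univ, Fintype.card_fin, nsmul_eq_mul]
    field_simp
  refine ⟨?_, hA', hmemL, ?_⟩
  · -- ACCP
    intro s hs hstep
    have hrep : ∀ k, HasRep (s k) := fun k => mem_hasRep (hs k)
    have keystep : ∀ k, nu (s (k + 1)) ≤ nu (s k) ∧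
        (nu (s k) = nu (s (k + 1)) →
          bb (s (k + 1)) ≤ bb (s k) ∧ (bb (s k) = bb (s (k + 1)) → s (k + 1) = s k)) := by
      intro k
      obtain ⟨h, hhH, hk⟩ := hstep k
      have hh : HasRep h := mem_hasRep hhH
      have hsl := step_lemma (hrep (k + 1)) hh
      rw [← hk] at hsl
      obtain ⟨l1, l2⟩ := hsl
      refine ⟨l1, fun he => ?_⟩
      obtain ⟨e1, e2⟩ := l2 he
      constructor
      · omega
      · intro hbe
        have hbh : bb h = 0 := by omega
        have : h = 0 := eq_zero_of_nu_bb hh e2 hbh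
        rw [this, add_zero] at hk
        exact hk.symm
    obtain ⟨N1, hN1⟩ := stab (fun k => nu (s k)) (fun k => (keystep k).1)
    have hbbdec : ∀ k, bb (s (N1 + (k + 1))) ≤ bb (s (N1 + k)) := by
      intro k
      have hnu : nu (s (N1 + k)) = nu (s (N1 + k + 1)) := by
        rw [hN1 (N1 + k) (by omega), hN1 (N1 + k + 1) (by omega)]
      have := ((keystep (N1 + k)).2 hnu).1
      simpa [Nat.add_assoc] using this
    obtain ⟨N2, hN2⟩ := stab (fun k => bb (s (N1 + k))) hbbdec
    refine ⟨N1 + N2, fun k hk => ?_⟩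
    have hcons : ∀ j, N1 + N2 ≤ j → s (j + 1) = s j := by
      intro j hj
      have hnu : nu (s j) = nu (s (j + 1)) := by
        rw [hN1 j (by omega), hN1 (j + 1) (by omega)]
      have hb1 : bb (s j) = bb (s (N1 + N2)) := by
        have := hN2 (j - N1) (by omega)
        rwa [show N1 + (j - N1) = j by omega] at this
      have hb2 : bb (s (j + 1)) = bb (s (N1 + N2)) := by
        have := hN2 (j + 1 - N1) (by omega)
        rwa [show N1 + (j + 1 - N1) = j + 1 by omega] at this
      exact ((keystep j).2 hnu).2 (by rw [hb1, hb2])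
    have : ∀ j, s (N1 + N2 + j) = s (N1 + N2) := by
      intro j
      induction j with
      | zero => rfl
      | succ j ih => rw [← ih, show N1 + N2 + (j + 1) = (N1 + N2 + j) + 1 by ring]
                     exact hcons _ (by omega)
    have := this (k - (N1 + N2))
    rwa [show N1 + N2 + (k - (N1 + N2)) = k by omega] at this
  · -- infinitude of L 1
    have hsub : {p : ℕ | p.Prime} ⊆ L 1 := fun p hp => hmemL p hp
    exact Set.Infinite.mono hsub Nat.infinite_setOf_prime
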